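/- Kullback–Leibler bound for the informative region: Fix λ ∈ (0,1) with a = a(λ) and b = b(λ) as in the lower-bound family. For every ε ∈ [0,1], log( (1−a−(1+ε)b) / (1−a−(1−ε)b) )·(1−a−(1+ε)b) + log( (a+(1+ε)b) / (a+(1−ε)b) )·(a+(1+ε)b) ≤ 4·b²·ε² / ( a·(1−a−2b) ). -/

import Mathlib

open Set

/-- `a(λ)` from the lower-bound construction. -/
noncomputable def aC (lam : ℝ) : ℝ :=
  (1 - lam) * (136 - 99 * lam) / (2 * (4 - 3 * lam) * (24 - 17 * lam))

/-- `b(λ)` from the lower-bound construction. -/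
noncomputable def bC (lam : ℝ) : ℝ := (1 - lam) / (2 * (24 - 17 * lam))

private lemma log_mul_le (p q : ℝ) (hp : 0 < p) (hq : 0 < q) :
    Real.log (p / q) * p ≤ p ^ 2 / q - p := by
  have h := Real.log_le_sub_one_of_pos (div_pos hp hq)
  have h2 := mul_le_mul_of_nonneg_right h hp.le
  have : (p / q - 1) * p = p ^ 2 / q - p := by field_simp
  linarith [this ▸ h2]

/-- Kullback–Leibler bound for the informative region:
for `λ ∈ (0,1)` (with `a = a(λ)`, `b = b(λ)`) and every `ε ∈ [0,1]`,
`KL(Ber(1−a−(1+ε)b) ‖ Ber(1−a−(1−ε)b)) ≤ 4b²ε²/(a(1−a−2b))`. -/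
theorem kl_bound_informative_region (lam : ℝ) (hlam : lam ∈ Ioo (0:ℝ) 1)
    (ε : ℝ) (hε : ε ∈ Icc (0:ℝ) 1) :
    Real.log ((1 - aC lam - (1 + ε) * bC lam) / (1 - aC lam - (1 - ε) * bC lam))
        * (1 - aC lam - (1 + ε) * bC lam)
      + Real.log ((aC lam + (1 + ε) * bC lam) / (aC lam + (1 - ε) * bC lam))
        * (aC lam + (1 + ε) * bC lam)
      ≤ 4 * (bC lam) ^ 2 * ε ^ 2 / (aC lam * (1 - aC lam - 2 * bC lam)) := by
  obtain ⟨hl0, hl1⟩ := hlam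
  obtain ⟨he0, he1⟩ := hε
  have hd1 : (0:ℝ) < 4 - 3 * lam := by nlinarith
  have hd2 : (0:ℝ) < 24 - 17 * lam := by nlinarith
  set A := aC lam with hAdef
  set B := bC lam with hBdef
  have hA : 0 < A := by
    rw [hAdef, aC]
    apply div_pos
    · nlinarith
    · nlinarith
  have hB : 0 < B := by
    rw [hBdef, bC]
    apply div_pos
    · nlinarith
    · nlinarith
  have hC : 0 < 1 - A - 2 * B := by
    have h : 1 - A - 2 * B = (48 - 31 * lam - 3 * lam ^ 2) /
        (2 * (4 - 3 * lam) * (24 - 17 * lam)) := by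
      rw [hAdef, hBdef, aC, bC]
      have hD : (2 * (4 - 3 * lam) * (24 - 17 * lam)) ≠ 0 :=
        mul_ne_zero (mul_ne_zero two_ne_zero hd1.ne') hd2.ne'
      have hE : (2 * (24 - 17 * lam)) ≠ 0 := mul_ne_zero two_ne_zero hd2.ne'
      have e1 := div_mul_cancel₀ ((1 - lam) * (136 - 99 * lam)) hD
      have e2 := div_mul_cancel₀ (1 - lam) hE
      rw [eq_div_iff hD]
      linear_combination (-1 : ℝ) * e1 - 2 * (4 - 3 * lam) * e2
    rw [h]
    apply div_pos
    · nlinarith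
    · nlinarith
  have hp1 : 0 < 1 - A - (1 + ε) * B := by nlinarith
  have hq1 : 0 < 1 - A - (1 - ε) * B := by nlinarith
  have hp2 : 0 < A + (1 + ε) * B := by nlinarith
  have hq2 : 0 < A + (1 - ε) * B := by nlinarith
  have L1 := log_mul_le _ _ hp1 hq1
  have L2 := log_mul_le _ _ hp2 hq2
  have key : (1 - A - (1 + ε) * B) ^ 2 / (1 - A - (1 - ε) * B) - (1 - A - (1 + ε) * B)
      + ((A + (1 + ε) * B) ^ 2 / (A + (1 - ε) * B) - (A + (1 + ε) * B))
      = 4 * ε ^ 2 * B ^ 2 / ((1 - A - (1 - ε) * B) * (A + (1 - ε) * B)) := by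
    rw [div_sub' hq1.ne', div_sub' hq2.ne', div_add_div _ _ hq1.ne' hq2.ne']
    congr 1
    ring
  have hq12 : A * (1 - A - 2 * B) ≤ (1 - A - (1 - ε) * B) * (A + (1 - ε) * B) := by
    have ht0 : 0 ≤ (1 - ε) * B := mul_nonneg (by linarith) hB.le
    nlinarith [mul_nonneg ht0 hq1.le,
      mul_nonneg hA.le (mul_nonneg (by linarith : (0:ℝ) ≤ 1 + ε) hB.le)]
  have hfin : 4 * ε ^ 2 * B ^ 2 / ((1 - A - (1 - ε) * B) * (A + (1 - ε) * B))
      ≤ 4 * B ^ 2 * ε ^ 2 / (A * (1 - A - 2 * B)) := by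
    have hnum : (0:ℝ) ≤ 4 * ε ^ 2 * B ^ 2 := by positivity
    have := div_le_div_of_nonneg_left hnum (mul_pos hA hC) hq12
    calc 4 * ε ^ 2 * B ^ 2 / ((1 - A - (1 - ε) * B) * (A + (1 - ε) * B))
        ≤ 4 * ε ^ 2 * B ^ 2 / (A * (1 - A - 2 * B)) := this
      _ = 4 * B ^ 2 * ε ^ 2 / (A * (1 - A - 2 * B)) := by ring
  linarith [key ▸ (add_le_add L1 L2)]
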